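/- For every n ∈ ℕ₀ and every pair of distinct candidates i, j ∈ [2^{n+3}] with i ▷ j in η_n, at least 2n+6 of the 4n+10 rows of the voting profile R_n rank i before j (so the winning margin in every pairwise challenge under R_n is at least 2). -/

import Mathlib

/-- The arrows of the tournament `η₀` on `{1,…,8}`. -/
def eta0Pairs : List (ℕ × ℕ) :=
  [(1,2),(1,3),(1,5),(2,3),(2,4),(2,6),(2,7),
   (3,4),(3,5),(3,6),(3,8),(4,1),(4,5),(4,8),
   (5,2),(5,6),(5,7),(6,1),(6,4),(6,7),(6,8),
   (7,1),(7,3),(7,4),(7,8),(8,1),(8,2),(8,5)]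

/-- The tournament `η₀` on `{1,…,8}`: `eta0 i j = true` iff `i ▷ j`. -/
def eta0 (i j : ℕ) : Bool := decide ((i, j) ∈ eta0Pairs)

/-- The recursively defined tournaments: `eta n` is the tournament `η_n` on
`{1,…,2^(n+3)}`, `eta n i j = true` meaning `i ▷ j`. -/
def eta : ℕ → ℕ → ℕ → Bool
  | 0, i, j => eta0 i j
  | n+1, i, j =>
    if i ≤ 2^(n+3) ∧ j ≤ 2^(n+3) then eta n i j
    else if 2^(n+3) < i ∧ 2^(n+3) < j then eta n (i - 2^(n+3)) (j - 2^(n+3))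
    else if i ≤ 2^(n+3) then decide ((i + j) % 2 = 0)
    else decide ((i + j) % 2 = 1)

/-- Number of rows (preference lists) of the voting profile `R` ranking `i` before `j`. -/
def prefCount (R : List (List ℕ)) (i j : ℕ) : ℕ :=
  (R.filter fun ρ => decide (ρ.idxOf i < ρ.idxOf j)).length

/-- `R` is a voting profile on the candidate set `{1,…,m}` generating the tournament `η`:
every row is a permutation of `{1,…,m}` and, for distinct candidates `i,j`, `i ▷ j`
holds iff strictly more rows rank `i` before `j` than rank `j` before `i`. -/
def Generates (R : List (List ℕ)) (m : ℕ) (η : ℕ → ℕ → Bool) : Prop :=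
  (∀ ρ ∈ R, ρ.Perm (List.range' 1 m)) ∧
  ∀ i ∈ List.range' 1 m, ∀ j ∈ List.range' 1 m, i ≠ j →
    (η i j = true ↔ prefCount R j i < prefCount R i j)

/-- Stearns' ten-row voting profile `R₀` on `{1,…,8}`. -/
def R0 : List (List ℕ) :=
  [[8,1,5,2,3,4,6,7],[2,7,6,4,1,3,5,8],[2,7,3,6,4,5,8,1],[4,1,3,8,5,6,7,2],
   [3,5,2,6,7,1,4,8],[6,8,4,1,5,7,2,3],[6,7,3,4,8,1,2,5],[8,5,2,7,1,4,3,6],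
   [7,8,5,6,3,4,1,2],[1,2,3,4,5,6,7,8]]

/-- The increasing list of the odd elements of `{1,…,2^(n+2)}`. -/
def Aodd (n : ℕ) : List ℕ := (List.range (2^(n+1))).map fun t => 2*t+1

/-- The increasing list of the even elements of `{1,…,2^(n+2)}`. -/
def Aeven (n : ℕ) : List ℕ := (List.range (2^(n+1))).map fun t => 2*t+2

/-- The increasing list of the odd elements of `{2^(n+2)+1,…,2^(n+3)}`. -/
def Bodd (n : ℕ) : List ℕ := (Aodd n).map (· + 2^(n+2))

/-- The increasing list of the even elements of `{2^(n+2)+1,…,2^(n+3)}`. -/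
def Beven (n : ℕ) : List ℕ := (Aeven n).map (· + 2^(n+2))

/-- The preference list `v₁ = (A₁, B₁, A₂, B₂)` on `{1,…,2^(n+3)}`. -/
def v1 (n : ℕ) : List ℕ := Aodd n ++ Bodd n ++ Aeven n ++ Beven n

/-- The preference list `v₂ = (Ā₂, B̄₂, Ā₁, B̄₁)` on `{1,…,2^(n+3)}`. -/
def v2 (n : ℕ) : List ℕ :=
  (Aeven n).reverse ++ (Beven n).reverse ++ (Aodd n).reverse ++ (Bodd n).reverse

/-- The preference list `v₃ = (B₁, A₂, B₂, A₁)` on `{1,…,2^(n+3)}`. -/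
def v3 (n : ℕ) : List ℕ := Bodd n ++ Aeven n ++ Beven n ++ Aodd n

/-- The preference list `v₄ = (B̄₂, Ā₁, B̄₁, Ā₂)` on `{1,…,2^(n+3)}`. -/
def v4 (n : ℕ) : List ℕ :=
  (Beven n).reverse ++ (Aodd n).reverse ++ (Bodd n).reverse ++ (Aeven n).reverse

/-- `bowtie P Q`: the voting profile whose `s`-th row (1-based) is the concatenation
`P_s ++ Q_s` when `s` is odd and `Q_s ++ P_s` when `s` is even. -/
def bowtie (P Q : List (List ℕ)) : List (List ℕ) :=
  (P.zip Q).zipIdx.map fun p => if p.2 % 2 = 0 then p.1.1 ++ p.1.2 else p.1.2 ++ p.1.1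

/-- The recursively constructed voting profile `R_n` on `{1,…,2^(n+3)}`:
`R_n = (v₁, v₂, v₃, v₄, R_{n-1} ⋈ (R_{n-1} + 2^(n+2)·𝟙))_V`. -/
def Rprofile : ℕ → List (List ℕ)
  | 0 => R0
  | n+1 =>
    v1 (n+1) :: v2 (n+1) :: v3 (n+1) :: v4 (n+1) ::
      bowtie (Rprofile n) ((Rprofile n).map fun ρ => ρ.map (· + 2^(n+3)))



open List


section Aux

lemma myIndexOf_map_of (g : ℕ → ℕ) (a : ℕ) :
    ∀ (l : List ℕ), (∀ b ∈ l, g b = g a → b = a) → (l.map g).idxOf (g a) = l.idxOf a := by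
  intro l
  induction l with
  | nil => intro _; rfl
  | cons b t ih =>
    intro h
    simp only [List.map_cons, List.idxOf_cons]
    by_cases hba : b = a
    · simp [hba]
    · have h1 : (b == a) = false := by simp [hba]
      have h2 : (g b == g a) = false := by
        simp only [beq_eq_false_iff_ne, ne_eq]
        intro he; exact hba (h b (List.mem_cons_self) he)
      rw [h1, h2]
      simp only [cond_false]
      rw [ih (fun b hb => h b (List.mem_cons_of_mem _ hb))]

lemma myIndexOf_range' : ∀ (M s t : ℕ), t < M → (List.range' s M).idxOf (s + t) = t := by
  intro M
  induction M with
  | zero => intro s t h; omega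
  | succ M ih =>
    intro s t ht
    rw [List.range'_succ, List.idxOf_cons]
    rcases Nat.eq_zero_or_pos t with h0 | h0
    · subst h0; simp
    · have h1 : (s == s + t) = false := by simp; omega
      rw [h1]; simp only [cond_false]
      have := ih (s+1) (t-1) (by omega)
      rw [show s + t = (s+1) + (t-1) by omega, this]
      omega

lemma myIndexOf_map_add (h : ℕ) (l : List ℕ) (a : ℕ) :
    (l.map (· + h)).idxOf (a + h) = l.idxOf a :=
  myIndexOf_map_of (· + h) a l (fun b _ hb => by simpa using hb)

/-- canonical arithmetic-progression block -/
def canon (M c : ℕ) : List ℕ := (List.range M).map fun t => 2*t+c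

lemma length_canon (M c : ℕ) : (canon M c).length = M := by simp [canon]

lemma length_canon_rev (M c : ℕ) : (canon M c).reverse.length = M := by simp [canon]

lemma mem_canon {M c x : ℕ} : x ∈ canon M c ↔ c ≤ x ∧ x % 2 = c % 2 ∧ x < 2*M + c := by
  simp only [canon, List.mem_map, List.mem_range]
  constructor
  · rintro ⟨t, ht, rfl⟩; omega
  · rintro ⟨h1, h2, h3⟩; exact ⟨(x - c)/2, by omega, by omega⟩

lemma mem_canon_rev {M c x : ℕ} : x ∈ (canon M c).reverse ↔ c ≤ x ∧ x % 2 = c % 2 ∧ x < 2*M + c := by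
  rw [List.mem_reverse, mem_canon]

lemma indexOf_canon {M c x : ℕ} (h1 : c ≤ x) (h2 : x % 2 = c % 2) (h3 : x < 2*M + c) :
    (canon M c).idxOf x = (x - c)/2 := by
  obtain ⟨t, ht, rfl⟩ : ∃ t, t < M ∧ x = 2*t+c := ⟨(x - c)/2, by omega, by omega⟩
  have key := myIndexOf_map_of (fun u => 2*u+c) t (List.range M)
    (by intro b _ hb; omega)
  rw [canon, key, List.range_eq_range']
  have h := myIndexOf_range' M 0 t ht
  rw [Nat.zero_add] at h
  rw [h]; omega

lemma indexOf_canon_rev {M c x : ℕ} (h1 : c ≤ x) (h2 : x % 2 = c % 2) (h3 : x < 2*M + c) :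
    (canon M c).reverse.idxOf x = M - 1 - (x - c)/2 := by
  have hrev : (canon M c).reverse = (List.range M).map (fun i => 2*(M - 1 - i)+c) := by
    rw [canon, ← List.map_reverse, List.range_eq_range', List.reverse_range', List.map_map]
    congr 1
    · funext i
      simp only [Function.comp_apply]
      omega
    · exact List.range_eq_range' (n := M)
  rw [hrev]
  obtain ⟨t, ht, hx⟩ : ∃ t, t < M ∧ x = 2*(M-1-t)+c ∧ t = M - 1 - (x-c)/2 :=
    ⟨M - 1 - (x-c)/2, by omega, by omega, rfl⟩
  obtain ⟨hx1, hx2⟩ := hx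
  have key := myIndexOf_map_of (fun i => 2*(M - 1 - i)+c) t (List.range M)
    (by intro b hb he; rw [List.mem_range] at hb; omega)
  rw [hx1, key, List.range_eq_range']
  have h := myIndexOf_range' M 0 t ht
  rw [Nat.zero_add] at h
  rw [h]; omega

end Aux

def pos1 (M x : ℕ) : ℕ :=
  if x % 2 = 1 then (if x ≤ 2*M then ((x-(1))/2) else 1*M + ((x-(2*M+1))/2))
  else (if x ≤ 2*M then 2*M + ((x-(2))/2) else 3*M + ((x-(2*M+2))/2))

def w1 (M : ℕ) : List ℕ := canon M (1) ++ (canon M (2*M+1) ++ (canon M (2) ++ canon M (2*M+2)))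

lemma idx_w1 {M x : ℕ} (hM : 0 < M) (h1 : 1 ≤ x) (h2 : x ≤ 4*M) :
    (w1 M).idxOf x = pos1 M x := by
  by_cases hp : x % 2 = 1 <;> by_cases hh : x ≤ 2*M
  · rw [w1]
    rw [List.idxOf_append_of_mem (by simp only [mem_canon, mem_canon_rev]; omega)]
    rw [indexOf_canon (by omega) (by omega) (by omega)]
    simp only [length_canon, length_canon_rev, pos1]
    rw [if_pos hp, if_pos hh] <;> omega
  · rw [w1]
    rw [List.idxOf_append_of_notMem (by intro hc; simp only [mem_canon, mem_canon_rev] at hc; omega)]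
    rw [List.idxOf_append_of_mem (by simp only [mem_canon, mem_canon_rev]; omega)]
    rw [indexOf_canon (by omega) (by omega) (by omega)]
    simp only [length_canon, length_canon_rev, pos1]
    rw [if_pos hp, if_neg hh] <;> omega
  · rw [w1]
    rw [List.idxOf_append_of_notMem (by intro hc; simp only [mem_canon, mem_canon_rev] at hc; omega)]
    rw [List.idxOf_append_of_notMem (by intro hc; simp only [mem_canon, mem_canon_rev] at hc; omega)]
    rw [List.idxOf_append_of_mem (by simp only [mem_canon, mem_canon_rev]; omega)]
    rw [indexOf_canon (by omega) (by omega) (by omega)]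
    simp only [length_canon, length_canon_rev, pos1]
    rw [if_neg hp, if_pos hh] <;> omega
  · rw [w1]
    rw [List.idxOf_append_of_notMem (by intro hc; simp only [mem_canon, mem_canon_rev] at hc; omega)]
    rw [List.idxOf_append_of_notMem (by intro hc; simp only [mem_canon, mem_canon_rev] at hc; omega)]
    rw [List.idxOf_append_of_notMem (by intro hc; simp only [mem_canon, mem_canon_rev] at hc; omega)]
    rw [indexOf_canon (by omega) (by omega) (by omega)]
    simp only [length_canon, length_canon_rev, pos1]
    rw [if_neg hp, if_neg hh] <;> omega

def pos2 (M x : ℕ) : ℕ :=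
  if x % 2 = 1 then (if x ≤ 2*M then 2*M + (M - 1 - (x-(1))/2) else 3*M + (M - 1 - (x-(2*M+1))/2))
  else (if x ≤ 2*M then (M - 1 - (x-(2))/2) else 1*M + (M - 1 - (x-(2*M+2))/2))

def w2 (M : ℕ) : List ℕ := (canon M (2)).reverse ++ ((canon M (2*M+2)).reverse ++ ((canon M (1)).reverse ++ (canon M (2*M+1)).reverse))

lemma idx_w2 {M x : ℕ} (hM : 0 < M) (h1 : 1 ≤ x) (h2 : x ≤ 4*M) :
    (w2 M).idxOf x = pos2 M x := by
  by_cases hp : x % 2 = 1 <;> by_cases hh : x ≤ 2*M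
  · rw [w2]
    rw [List.idxOf_append_of_notMem (by intro hc; simp only [mem_canon, mem_canon_rev] at hc; omega)]
    rw [List.idxOf_append_of_notMem (by intro hc; simp only [mem_canon, mem_canon_rev] at hc; omega)]
    rw [List.idxOf_append_of_mem (by simp only [mem_canon, mem_canon_rev]; omega)]
    rw [indexOf_canon_rev (by omega) (by omega) (by omega)]
    simp only [length_canon, length_canon_rev, pos2]
    rw [if_pos hp, if_pos hh] <;> omega
  · rw [w2]
    rw [List.idxOf_append_of_notMem (by intro hc; simp only [mem_canon, mem_canon_rev] at hc; omega)]
    rw [List.idxOf_append_of_notMem (by intro hc; simp only [mem_canon, mem_canon_rev] at hc; omega)]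
    rw [List.idxOf_append_of_notMem (by intro hc; simp only [mem_canon, mem_canon_rev] at hc; omega)]
    rw [indexOf_canon_rev (by omega) (by omega) (by omega)]
    simp only [length_canon, length_canon_rev, pos2]
    rw [if_pos hp, if_neg hh] <;> omega
  · rw [w2]
    rw [List.idxOf_append_of_mem (by simp only [mem_canon, mem_canon_rev]; omega)]
    rw [indexOf_canon_rev (by omega) (by omega) (by omega)]
    simp only [length_canon, length_canon_rev, pos2]
    rw [if_neg hp, if_pos hh] <;> omega
  · rw [w2]
    rw [List.idxOf_append_of_notMem (by intro hc; simp only [mem_canon, mem_canon_rev] at hc; omega)]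
    rw [List.idxOf_append_of_mem (by simp only [mem_canon, mem_canon_rev]; omega)]
    rw [indexOf_canon_rev (by omega) (by omega) (by omega)]
    simp only [length_canon, length_canon_rev, pos2]
    rw [if_neg hp, if_neg hh] <;> omega

def pos3 (M x : ℕ) : ℕ :=
  if x % 2 = 1 then (if x ≤ 2*M then 3*M + ((x-(1))/2) else ((x-(2*M+1))/2))
  else (if x ≤ 2*M then 1*M + ((x-(2))/2) else 2*M + ((x-(2*M+2))/2))

def w3 (M : ℕ) : List ℕ := canon M (2*M+1) ++ (canon M (2) ++ (canon M (2*M+2) ++ canon M (1)))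

lemma idx_w3 {M x : ℕ} (hM : 0 < M) (h1 : 1 ≤ x) (h2 : x ≤ 4*M) :
    (w3 M).idxOf x = pos3 M x := by
  by_cases hp : x % 2 = 1 <;> by_cases hh : x ≤ 2*M
  · rw [w3]
    rw [List.idxOf_append_of_notMem (by intro hc; simp only [mem_canon, mem_canon_rev] at hc; omega)]
    rw [List.idxOf_append_of_notMem (by intro hc; simp only [mem_canon, mem_canon_rev] at hc; omega)]
    rw [List.idxOf_append_of_notMem (by intro hc; simp only [mem_canon, mem_canon_rev] at hc; omega)]
    rw [indexOf_canon (by omega) (by omega) (by omega)]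
    simp only [length_canon, length_canon_rev, pos3]
    rw [if_pos hp, if_pos hh] <;> omega
  · rw [w3]
    rw [List.idxOf_append_of_mem (by simp only [mem_canon, mem_canon_rev]; omega)]
    rw [indexOf_canon (by omega) (by omega) (by omega)]
    simp only [length_canon, length_canon_rev, pos3]
    rw [if_pos hp, if_neg hh] <;> omega
  · rw [w3]
    rw [List.idxOf_append_of_notMem (by intro hc; simp only [mem_canon, mem_canon_rev] at hc; omega)]
    rw [List.idxOf_append_of_mem (by simp only [mem_canon, mem_canon_rev]; omega)]
    rw [indexOf_canon (by omega) (by omega) (by omega)]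
    simp only [length_canon, length_canon_rev, pos3]
    rw [if_neg hp, if_pos hh] <;> omega
  · rw [w3]
    rw [List.idxOf_append_of_notMem (by intro hc; simp only [mem_canon, mem_canon_rev] at hc; omega)]
    rw [List.idxOf_append_of_notMem (by intro hc; simp only [mem_canon, mem_canon_rev] at hc; omega)]
    rw [List.idxOf_append_of_mem (by simp only [mem_canon, mem_canon_rev]; omega)]
    rw [indexOf_canon (by omega) (by omega) (by omega)]
    simp only [length_canon, length_canon_rev, pos3]
    rw [if_neg hp, if_neg hh] <;> omega

def pos4 (M x : ℕ) : ℕ :=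
  if x % 2 = 1 then (if x ≤ 2*M then 1*M + (M - 1 - (x-(1))/2) else 2*M + (M - 1 - (x-(2*M+1))/2))
  else (if x ≤ 2*M then 3*M + (M - 1 - (x-(2))/2) else (M - 1 - (x-(2*M+2))/2))

def w4 (M : ℕ) : List ℕ := (canon M (2*M+2)).reverse ++ ((canon M (1)).reverse ++ ((canon M (2*M+1)).reverse ++ (canon M (2)).reverse))

lemma idx_w4 {M x : ℕ} (hM : 0 < M) (h1 : 1 ≤ x) (h2 : x ≤ 4*M) :
    (w4 M).idxOf x = pos4 M x := by
  by_cases hp : x % 2 = 1 <;> by_cases hh : x ≤ 2*M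
  · rw [w4]
    rw [List.idxOf_append_of_notMem (by intro hc; simp only [mem_canon, mem_canon_rev] at hc; omega)]
    rw [List.idxOf_append_of_mem (by simp only [mem_canon, mem_canon_rev]; omega)]
    rw [indexOf_canon_rev (by omega) (by omega) (by omega)]
    simp only [length_canon, length_canon_rev, pos4]
    rw [if_pos hp, if_pos hh] <;> omega
  · rw [w4]
    rw [List.idxOf_append_of_notMem (by intro hc; simp only [mem_canon, mem_canon_rev] at hc; omega)]
    rw [List.idxOf_append_of_notMem (by intro hc; simp only [mem_canon, mem_canon_rev] at hc; omega)]
    rw [List.idxOf_append_of_mem (by simp only [mem_canon, mem_canon_rev]; omega)]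
    rw [indexOf_canon_rev (by omega) (by omega) (by omega)]
    simp only [length_canon, length_canon_rev, pos4]
    rw [if_pos hp, if_neg hh] <;> omega
  · rw [w4]
    rw [List.idxOf_append_of_notMem (by intro hc; simp only [mem_canon, mem_canon_rev] at hc; omega)]
    rw [List.idxOf_append_of_notMem (by intro hc; simp only [mem_canon, mem_canon_rev] at hc; omega)]
    rw [List.idxOf_append_of_notMem (by intro hc; simp only [mem_canon, mem_canon_rev] at hc; omega)]
    rw [indexOf_canon_rev (by omega) (by omega) (by omega)]
    simp only [length_canon, length_canon_rev, pos4]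
    rw [if_neg hp, if_pos hh] <;> omega
  · rw [w4]
    rw [List.idxOf_append_of_mem (by simp only [mem_canon, mem_canon_rev]; omega)]
    rw [indexOf_canon_rev (by omega) (by omega) (by omega)]
    simp only [length_canon, length_canon_rev, pos4]
    rw [if_neg hp, if_neg hh] <;> omega

lemma vsum_same {M i j : ℕ} (hM : 0 < M) (hi1 : 1 ≤ i) (hi2 : i ≤ 4*M)
    (hj1 : 1 ≤ j) (hj2 : j ≤ 4*M) (hne : i ≠ j) (hhalf : i ≤ 2*M ↔ j ≤ 2*M) :
    2 ≤ (if pos1 M i < pos1 M j then 1 else 0) + (if pos2 M i < pos2 M j then 1 else 0)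
      + (if pos3 M i < pos3 M j then 1 else 0) + (if pos4 M i < pos4 M j then 1 else 0) := by
  simp only [pos1, pos2, pos3, pos4]
  split_ifs <;> omega

lemma vsum_cross1 {M i j : ℕ} (hM : 0 < M) (hi1 : 1 ≤ i) (hi2 : i ≤ 2*M)
    (hj1 : 2*M < j) (hj2 : j ≤ 4*M) (hpar : (i + j) % 2 = 0) :
    3 ≤ (if pos1 M i < pos1 M j then 1 else 0) + (if pos2 M i < pos2 M j then 1 else 0)
      + (if pos3 M i < pos3 M j then 1 else 0) + (if pos4 M i < pos4 M j then 1 else 0) := by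
  simp only [pos1, pos2, pos3, pos4]
  split_ifs <;> omega

lemma vsum_cross2 {M i j : ℕ} (hM : 0 < M) (hi1 : 2*M < i) (hi2 : i ≤ 4*M)
    (hj1 : 1 ≤ j) (hj2 : j ≤ 2*M) (hpar : (i + j) % 2 = 1) :
    3 ≤ (if pos1 M i < pos1 M j then 1 else 0) + (if pos2 M i < pos2 M j then 1 else 0)
      + (if pos3 M i < pos3 M j then 1 else 0) + (if pos4 M i < pos4 M j then 1 else 0) := by
  simp only [pos1, pos2, pos3, pos4]
  split_ifs <;> omega
lemma pow_e1 (k : ℕ) : (2:ℕ)^(k+2) = 2*2^(k+1) := by ring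
lemma pow_e2 (k : ℕ) : (2:ℕ)^(k+3) = 4*2^(k+1) := by ring

lemma Aodd_eq (k : ℕ) : Aodd k = canon (2^(k+1)) 1 := rfl
lemma Aeven_eq (k : ℕ) : Aeven k = canon (2^(k+1)) 2 := rfl

lemma Bodd_eq (k : ℕ) : Bodd k = canon (2^(k+1)) (2*2^(k+1)+1) := by
  rw [Bodd, Aodd_eq, canon, canon, List.map_map]
  congr 1
  funext t
  simp only [Function.comp_apply]
  rw [pow_e1 k]
  omega

lemma Beven_eq (k : ℕ) : Beven k = canon (2^(k+1)) (2*2^(k+1)+2) := by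
  rw [Beven, Aeven_eq, canon, canon, List.map_map]
  congr 1
  funext t
  simp only [Function.comp_apply]
  rw [pow_e1 k]
  omega

lemma v1_eq (k : ℕ) : v1 k = w1 (2^(k+1)) := by
  rw [v1, w1, Aodd_eq, Bodd_eq, Aeven_eq, Beven_eq]
  simp [List.append_assoc]

lemma v2_eq (k : ℕ) : v2 k = w2 (2^(k+1)) := by
  rw [v2, w2, Aodd_eq, Bodd_eq, Aeven_eq, Beven_eq]
  simp [List.append_assoc]

lemma v3_eq (k : ℕ) : v3 k = w3 (2^(k+1)) := by
  rw [v3, w3, Aodd_eq, Bodd_eq, Aeven_eq, Beven_eq]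
  simp [List.append_assoc]

lemma v4_eq (k : ℕ) : v4 k = w4 (2^(k+1)) := by
  rw [v4, w4, Aodd_eq, Bodd_eq, Aeven_eq, Beven_eq]
  simp [List.append_assoc]

lemma indexOf_v1 (k x : ℕ) (h1 : 1 ≤ x) (h2 : x ≤ 2^(k+3)) :
    (v1 k).idxOf x = pos1 (2^(k+1)) x := by
  rw [v1_eq]; exact idx_w1 (pow_pos (by norm_num) _) h1 (by rw [← pow_e2]; exact h2)

lemma indexOf_v2 (k x : ℕ) (h1 : 1 ≤ x) (h2 : x ≤ 2^(k+3)) :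
    (v2 k).idxOf x = pos2 (2^(k+1)) x := by
  rw [v2_eq]; exact idx_w2 (pow_pos (by norm_num) _) h1 (by rw [← pow_e2]; exact h2)

lemma indexOf_v3 (k x : ℕ) (h1 : 1 ≤ x) (h2 : x ≤ 2^(k+3)) :
    (v3 k).idxOf x = pos3 (2^(k+1)) x := by
  rw [v3_eq]; exact idx_w3 (pow_pos (by norm_num) _) h1 (by rw [← pow_e2]; exact h2)

lemma indexOf_v4 (k x : ℕ) (h1 : 1 ≤ x) (h2 : x ≤ 2^(k+3)) :
    (v4 k).idxOf x = pos4 (2^(k+1)) x := by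
  rw [v4_eq]; exact idx_w4 (pow_pos (by norm_num) _) h1 (by rw [← pow_e2]; exact h2)

lemma mem_v1 (k x : ℕ) : x ∈ v1 k ↔ 1 ≤ x ∧ x ≤ 2^(k+3) := by
  have hM : 0 < (2:ℕ)^(k+1) := pow_pos (by norm_num) _
  rw [v1_eq, pow_e2]
  simp only [w1, List.mem_append, mem_canon, mem_canon_rev]
  omega

lemma mem_v2 (k x : ℕ) : x ∈ v2 k ↔ 1 ≤ x ∧ x ≤ 2^(k+3) := by
  have hM : 0 < (2:ℕ)^(k+1) := pow_pos (by norm_num) _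
  rw [v2_eq, pow_e2]
  simp only [w2, List.mem_append, mem_canon, mem_canon_rev]
  omega

lemma mem_v3 (k x : ℕ) : x ∈ v3 k ↔ 1 ≤ x ∧ x ≤ 2^(k+3) := by
  have hM : 0 < (2:ℕ)^(k+1) := pow_pos (by norm_num) _
  rw [v3_eq, pow_e2]
  simp only [w3, List.mem_append, mem_canon, mem_canon_rev]
  omega

lemma mem_v4 (k x : ℕ) : x ∈ v4 k ↔ 1 ≤ x ∧ x ≤ 2^(k+3) := by
  have hM : 0 < (2:ℕ)^(k+1) := pow_pos (by norm_num) _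
  rw [v4_eq, pow_e2]
  simp only [w4, List.mem_append, mem_canon, mem_canon_rev]
  omega

lemma mem_of_mem_enumFrom {α : Type*} {x : α × ℕ} :
    ∀ (l : List α) (m : ℕ), x ∈ List.zipIdx l m → x.1 ∈ l := by
  intro l
  induction l with
  | nil => intro m h; simp [List.zipIdx] at h
  | cons a t ih =>
    intro m h
    rw [List.zipIdx_cons] at h
    rcases List.mem_cons.1 h with h | h
    · rw [h]; exact List.mem_cons_self
    · exact List.mem_cons_of_mem _ (ih _ h)

lemma mem_bowtie {P Q : List (List ℕ)} {ρ : List ℕ} (h : ρ ∈ bowtie P Q) :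
    ∃ pq ∈ P.zip Q, ρ = pq.1 ++ pq.2 ∨ ρ = pq.2 ++ pq.1 := by
  simp only [bowtie, List.mem_map] at h
  obtain ⟨kp, hk, heq⟩ := h
  refine ⟨kp.1, mem_of_mem_enumFrom _ 0 hk, ?_⟩
  by_cases hp : kp.2 % 2 = 0
  · left; rw [← heq, if_pos hp]
  · right; rw [← heq, if_neg hp]

lemma countP_enumFrom_bowtie (pred : List ℕ → Bool) (g : List ℕ × List ℕ → Bool) :
    ∀ (l : List (List ℕ × List ℕ)) (m : ℕ),
      (∀ pq ∈ l, pred (pq.1 ++ pq.2) = g pq ∧ pred (pq.2 ++ pq.1) = g pq) →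
      ((List.zipIdx l m).map fun p =>
          if p.2 % 2 = 0 then p.1.1 ++ p.1.2 else p.1.2 ++ p.1.1).countP pred
        = l.countP g := by
  intro l
  induction l with
  | nil => intro m h; rfl
  | cons a t ih =>
    intro m h
    rw [List.zipIdx_cons, List.map_cons, List.countP_cons, List.countP_cons,
      ih (m+1) (fun pq hpq => h pq (List.mem_cons_of_mem _ hpq))]
    have ha := h a (List.mem_cons_self)
    by_cases hm : m % 2 = 0
    · simp [hm, ha.1]
    · simp [hm, ha.2]

lemma countP_enumFrom_alt1 (pred : List ℕ → Bool) :
    ∀ (l : List (List ℕ × List ℕ)) (m : ℕ),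
      (∀ pq ∈ l, pred (pq.1 ++ pq.2) = true ∧ pred (pq.2 ++ pq.1) = false) →
      ((List.zipIdx l m).map fun p =>
          if p.2 % 2 = 0 then p.1.1 ++ p.1.2 else p.1.2 ++ p.1.1).countP pred
        = (l.length + 1 - m % 2)/2 := by
  intro l
  induction l with
  | nil => intro m h; simp only [List.zipIdx_nil, List.map_nil, List.countP_nil, List.length_nil]; omega
  | cons a t ih =>
    intro m h
    rw [List.zipIdx_cons, List.map_cons, List.countP_cons,
      ih (m+1) (fun pq hpq => h pq (List.mem_cons_of_mem _ hpq))]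
    have ha := h a (List.mem_cons_self)
    simp only [List.length_cons]
    by_cases hm : m % 2 = 0 <;> simp [hm, ha.1, ha.2] <;> omega

lemma countP_enumFrom_alt0 (pred : List ℕ → Bool) :
    ∀ (l : List (List ℕ × List ℕ)) (m : ℕ),
      (∀ pq ∈ l, pred (pq.1 ++ pq.2) = false ∧ pred (pq.2 ++ pq.1) = true) →
      ((List.zipIdx l m).map fun p =>
          if p.2 % 2 = 0 then p.1.1 ++ p.1.2 else p.1.2 ++ p.1.1).countP pred
        = (l.length + m % 2)/2 := by
  intro l
  induction l with
  | nil => intro m h; simp only [List.zipIdx_nil, List.map_nil, List.countP_nil, List.length_nil]; omega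
  | cons a t ih =>
    intro m h
    rw [List.zipIdx_cons, List.map_cons, List.countP_cons,
      ih (m+1) (fun pq hpq => h pq (List.mem_cons_of_mem _ hpq))]
    have ha := h a (List.mem_cons_self)
    simp only [List.length_cons]
    by_cases hm : m % 2 = 0 <;> simp [hm, ha.1, ha.2] <;> omega

lemma prefCount_countP (R : List (List ℕ)) (i j : ℕ) :
    prefCount R i j = R.countP (fun ρ => decide (ρ.idxOf i < ρ.idxOf j)) :=
  List.countP_eq_length_filter.symm

lemma prefCount_cons (ρ : List ℕ) (R : List (List ℕ)) (i j : ℕ) :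
    prefCount (ρ::R) i j = (if ρ.idxOf i < ρ.idxOf j then 1 else 0) + prefCount R i j := by
  rw [prefCount_countP, prefCount_countP, List.countP_cons]
  by_cases h : ρ.idxOf i < ρ.idxOf j <;> simp [h] <;> omega

lemma zip_map_self {α β : Type*} (f : α → β) (P : List α) :
    P.zip (P.map f) = P.map (fun a => (a, f a)) := by
  induction P with
  | nil => rfl
  | cons a t ih => simp only [List.map_cons, List.zip_cons_cons, ih]

lemma countP_zip_fst {α β : Type*} (g : α → Bool) :
    ∀ (P : List α) (Q : List β), P.length = Q.length →
      (P.zip Q).countP (fun pq => g pq.1) = P.countP g := by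
  intro P
  induction P with
  | nil => intro Q h; rfl
  | cons a t ih =>
    intro Q h
    cases Q with
    | nil => simp at h
    | cons b s =>
      rw [List.zip_cons_cons, List.countP_cons, List.countP_cons, ih s (by simpa using h)]

lemma prefCount_bowtie_fst (P Q : List (List ℕ)) (hlen : P.length = Q.length) (i j : ℕ)
    (g : List ℕ → Bool)
    (h : ∀ pq ∈ P.zip Q,
      (decide ((pq.1++pq.2).idxOf i < (pq.1++pq.2).idxOf j) = g pq.1)
      ∧ (decide ((pq.2++pq.1).idxOf i < (pq.2++pq.1).idxOf j) = g pq.1)) :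
    prefCount (bowtie P Q) i j = P.countP g := by
  rw [prefCount_countP]
  simp only [bowtie]
  rw [show (P.zip Q).zipIdx = List.zipIdx (P.zip Q) 0 from rfl]
  rw [countP_enumFrom_bowtie _ (fun pq => g pq.1) _ 0 h]
  exact countP_zip_fst g P Q hlen

lemma prefCount_bowtie_cross1 (P Q : List (List ℕ)) (i j : ℕ)
    (h : ∀ pq ∈ P.zip Q,
      (decide ((pq.1++pq.2).idxOf i < (pq.1++pq.2).idxOf j) = true)
      ∧ (decide ((pq.2++pq.1).idxOf i < (pq.2++pq.1).idxOf j) = false)) :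
    prefCount (bowtie P Q) i j = ((P.zip Q).length + 1)/2 := by
  rw [prefCount_countP]
  simp only [bowtie]
  rw [show (P.zip Q).zipIdx = List.zipIdx (P.zip Q) 0 from rfl]
  rw [countP_enumFrom_alt1 _ _ 0 h]
  norm_num

lemma prefCount_bowtie_cross2 (P Q : List (List ℕ)) (i j : ℕ)
    (h : ∀ pq ∈ P.zip Q,
      (decide ((pq.1++pq.2).idxOf i < (pq.1++pq.2).idxOf j) = false)
      ∧ (decide ((pq.2++pq.1).idxOf i < (pq.2++pq.1).idxOf j) = true)) :
    prefCount (bowtie P Q) i j = (P.zip Q).length/2 := by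
  rw [prefCount_countP]
  simp only [bowtie]
  rw [show (P.zip Q).zipIdx = List.zipIdx (P.zip Q) 0 from rfl]
  rw [countP_enumFrom_alt0 _ _ 0 h]
  norm_num

lemma length_Rprofile (n : ℕ) : (Rprofile n).length = 4*n+10 := by
  induction n with
  | zero => rfl
  | succ n ih =>
    simp only [Rprofile, bowtie, List.length_cons, List.length_map, List.length_zipIdx,
      List.length_zip, ih, Nat.min_self]
    omega

lemma mem_Rprofile (n : ℕ) : ∀ ρ ∈ Rprofile n, ∀ x, x ∈ ρ ↔ (1 ≤ x ∧ x ≤ 2^(n+3)) := by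
  induction n with
  | zero =>
    have hperm : ∀ ρ ∈ R0, ρ.Perm (List.range' 1 8) := by decide
    intro ρ hρ x
    rw [(hperm ρ hρ).mem_iff, List.mem_range'_1]
    norm_num
    omega
  | succ n ih =>
    intro ρ hρ x
    simp only [Rprofile, List.mem_cons] at hρ
    have hpow : (2:ℕ)^(n+1+3) = 2*2^(n+3) := by ring
    rcases hρ with rfl | rfl | rfl | rfl | hρ
    · exact mem_v1 (n+1) x
    · exact mem_v2 (n+1) x
    · exact mem_v3 (n+1) x
    · exact mem_v4 (n+1) x
    · obtain ⟨⟨p, q⟩, hpq, hcase⟩ := mem_bowtie hρ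
      obtain ⟨hp, hq⟩ := List.of_mem_zip hpq
      obtain ⟨ρ', hρ', rfl⟩ := List.mem_map.1 hq
      have h1 := ih p hp
      have h2' := ih ρ' hρ'
      have hmem : ∀ y, y ∈ ρ'.map (· + 2^(n+3)) ↔ (2^(n+3)+1 ≤ y ∧ y ≤ 2^(n+3)+2^(n+3)) := by
        intro y
        simp only [List.mem_map]
        constructor
        · rintro ⟨z, hz, rfl⟩
          have := (h2' z).1 hz
          omega
        · intro hy
          exact ⟨y - 2^(n+3), (h2' _).2 ⟨by omega, by omega⟩, by omega⟩
      rcases hcase with rfl | rfl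
      · rw [List.mem_append, h1 x, hmem x]
        omega
      · rw [List.mem_append, h1 x, hmem x]
        omega

lemma bowtie_caseA (h : ℕ) (P : List (List ℕ))
    (hmem : ∀ ρ ∈ P, ∀ x, x ∈ ρ ↔ (1 ≤ x ∧ x ≤ h))
    (i j : ℕ) (hi1 : 1 ≤ i) (hi2 : i ≤ h) (hj1 : 1 ≤ j) (hj2 : j ≤ h) :
    prefCount (bowtie P (P.map fun ρ => ρ.map (· + h))) i j = prefCount P i j := by
  rw [prefCount_countP P i j]
  apply prefCount_bowtie_fst _ _ (by rw [List.length_map])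
  intro pq hpq
  rw [zip_map_self] at hpq
  obtain ⟨p, hp, rfl⟩ := List.mem_map.1 hpq
  dsimp only
  have hmem' := hmem p hp
  have hiP : i ∈ p := (hmem' i).2 ⟨hi1, hi2⟩
  have hjP : j ∈ p := (hmem' j).2 ⟨hj1, hj2⟩
  have hiQ : i ∉ p.map (· + h) := by
    simp only [List.mem_map]
    rintro ⟨y, hy, hyx⟩
    have := (hmem' y).1 hy
    omega
  have hjQ : j ∉ p.map (· + h) := by
    simp only [List.mem_map]
    rintro ⟨y, hy, hyx⟩
    have := (hmem' y).1 hy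
    omega
  constructor
  · rw [List.idxOf_append_of_mem hiP, List.idxOf_append_of_mem hjP]
  · rw [List.idxOf_append_of_notMem hiQ, List.idxOf_append_of_notMem hjQ]
    exact decide_eq_decide.2 (by omega)

lemma bowtie_caseB (h : ℕ) (P : List (List ℕ))
    (hmem : ∀ ρ ∈ P, ∀ x, x ∈ ρ ↔ (1 ≤ x ∧ x ≤ h))
    (i j : ℕ) (hi1 : h < i) (hi2 : i ≤ 2*h) (hj1 : h < j) (hj2 : j ≤ 2*h) :
    prefCount (bowtie P (P.map fun ρ => ρ.map (· + h))) i j = prefCount P (i-h) (j-h) := by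
  rw [prefCount_countP P]
  apply prefCount_bowtie_fst _ _ (by rw [List.length_map])
  intro pq hpq
  rw [zip_map_self] at hpq
  obtain ⟨p, hp, rfl⟩ := List.mem_map.1 hpq
  dsimp only
  have hmem' := hmem p hp
  have hiP : i ∉ p := by intro hc; have := (hmem' i).1 hc; omega
  have hjP : j ∉ p := by intro hc; have := (hmem' j).1 hc; omega
  have hiQ : i ∈ p.map (· + h) :=
    List.mem_map.2 ⟨i - h, (hmem' _).2 ⟨by omega, by omega⟩, show i - h + h = i by omega⟩
  have hjQ : j ∈ p.map (· + h) :=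
    List.mem_map.2 ⟨j - h, (hmem' _).2 ⟨by omega, by omega⟩, show j - h + h = j by omega⟩
  have e1 : (p.map (· + h)).idxOf i = p.idxOf (i-h) := by
    have := myIndexOf_map_add h p (i-h)
    rwa [show i - h + h = i by omega] at this
  have e2 : (p.map (· + h)).idxOf j = p.idxOf (j-h) := by
    have := myIndexOf_map_add h p (j-h)
    rwa [show j - h + h = j by omega] at this
  constructor
  · rw [List.idxOf_append_of_notMem hiP, List.idxOf_append_of_notMem hjP, e1, e2]
    exact decide_eq_decide.2 (by omega)
  · rw [List.idxOf_append_of_mem hiQ, List.idxOf_append_of_mem hjQ, e1, e2]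

lemma bowtie_caseC (h : ℕ) (P : List (List ℕ))
    (hmem : ∀ ρ ∈ P, ∀ x, x ∈ ρ ↔ (1 ≤ x ∧ x ≤ h))
    (i j : ℕ) (hi1 : 1 ≤ i) (hi2 : i ≤ h) (hj1 : h < j) (hj2 : j ≤ 2*h) :
    prefCount (bowtie P (P.map fun ρ => ρ.map (· + h))) i j = (P.length + 1)/2 := by
  have hz : (P.zip (P.map fun ρ => ρ.map (· + h))).length = P.length := by
    rw [List.length_zip, List.length_map, Nat.min_self]
  rw [← hz]
  apply prefCount_bowtie_cross1
  intro pq hpq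
  rw [zip_map_self] at hpq
  obtain ⟨p, hp, rfl⟩ := List.mem_map.1 hpq
  dsimp only
  have hmem' := hmem p hp
  have hiP : i ∈ p := (hmem' i).2 ⟨hi1, hi2⟩
  have hjP : j ∉ p := by intro hc; have := (hmem' j).1 hc; omega
  have hiQ : i ∉ p.map (· + h) := by
    simp only [List.mem_map]
    rintro ⟨y, hy, hyx⟩
    have := (hmem' y).1 hy
    omega
  have hjQ : j ∈ p.map (· + h) :=
    List.mem_map.2 ⟨j - h, (hmem' _).2 ⟨by omega, by omega⟩, show j - h + h = j by omega⟩
  have hil := List.idxOf_lt_length_iff.2 hiP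
  have hjl := List.idxOf_lt_length_iff.2 hjQ
  constructor
  · rw [List.idxOf_append_of_mem hiP, List.idxOf_append_of_notMem hjP]
    simp only [decide_eq_true_eq]
    omega
  · rw [List.idxOf_append_of_notMem hiQ, List.idxOf_append_of_mem hjQ]
    simp only [decide_eq_false_iff_not]
    omega

lemma bowtie_caseD (h : ℕ) (P : List (List ℕ))
    (hmem : ∀ ρ ∈ P, ∀ x, x ∈ ρ ↔ (1 ≤ x ∧ x ≤ h))
    (i j : ℕ) (hi1 : h < i) (hi2 : i ≤ 2*h) (hj1 : 1 ≤ j) (hj2 : j ≤ h) :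
    prefCount (bowtie P (P.map fun ρ => ρ.map (· + h))) i j = P.length/2 := by
  have hz : (P.zip (P.map fun ρ => ρ.map (· + h))).length = P.length := by
    rw [List.length_zip, List.length_map, Nat.min_self]
  rw [← hz]
  apply prefCount_bowtie_cross2
  intro pq hpq
  rw [zip_map_self] at hpq
  obtain ⟨p, hp, rfl⟩ := List.mem_map.1 hpq
  dsimp only
  have hmem' := hmem p hp
  have hjP : j ∈ p := (hmem' j).2 ⟨hj1, hj2⟩
  have hiP : i ∉ p := by intro hc; have := (hmem' i).1 hc; omega
  have hjQ : j ∉ p.map (· + h) := by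
    simp only [List.mem_map]
    rintro ⟨y, hy, hyx⟩
    have := (hmem' y).1 hy
    omega
  have hiQ : i ∈ p.map (· + h) :=
    List.mem_map.2 ⟨i - h, (hmem' _).2 ⟨by omega, by omega⟩, show i - h + h = i by omega⟩
  have hjl := List.idxOf_lt_length_iff.2 hjP
  have hil := List.idxOf_lt_length_iff.2 hiQ
  constructor
  · rw [List.idxOf_append_of_notMem hiP, List.idxOf_append_of_mem hjP]
    simp only [decide_eq_false_iff_not]
    omega
  · rw [List.idxOf_append_of_mem hiQ, List.idxOf_append_of_notMem hjQ]
    simp only [decide_eq_true_eq]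
    omega


/-- For every `n` and distinct `i, j ∈ {1,…,2^(n+3)}` with `i ▷ j` in `η_n`, at least
`2n+6` of the `4n+10` rows of `R_n` rank `i` before `j` (winning margin at least 2). -/
theorem stmt14 (n : ℕ) :
    ∀ i ∈ List.range' 1 (2^(n+3)), ∀ j ∈ List.range' 1 (2^(n+3)), i ≠ j →
      eta n i j = true → 2*n + 6 ≤ prefCount (Rprofile n) i j := by
  induction n with
  | zero => decide
  | succ n ih =>
    intro i hi j hj hne heta
    rw [List.mem_range'_1] at hi hj
    have hpow3 : (2:ℕ)^(n+1+3) = 2*2^(n+3) := by ring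
    have hM : 0 < (2:ℕ)^(n+1+1) := pow_pos (by norm_num) _
    have e2M : 2*(2:ℕ)^(n+1+1) = 2^(n+3) := by ring
    have e4M : 4*(2:ℕ)^(n+1+1) = 2^(n+1+3) := by ring
    have hmem := mem_Rprofile n
    have hlenP := length_Rprofile n
    have hrw : prefCount (Rprofile (n+1)) i j =
        (if (v1 (n+1)).idxOf i < (v1 (n+1)).idxOf j then 1 else 0)
      + ((if (v2 (n+1)).idxOf i < (v2 (n+1)).idxOf j then 1 else 0)
      + ((if (v3 (n+1)).idxOf i < (v3 (n+1)).idxOf j then 1 else 0)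
      + ((if (v4 (n+1)).idxOf i < (v4 (n+1)).idxOf j then 1 else 0)
      + prefCount (bowtie (Rprofile n) ((Rprofile n).map fun ρ => ρ.map (· + 2^(n+3)))) i j))) := by
      rw [show Rprofile (n+1) = v1 (n+1) :: v2 (n+1) :: v3 (n+1) :: v4 (n+1) ::
        bowtie (Rprofile n) ((Rprofile n).map fun ρ => ρ.map (· + 2^(n+3))) from rfl,
        prefCount_cons, prefCount_cons, prefCount_cons, prefCount_cons]
    rw [hrw]
    rw [indexOf_v1 (n+1) i (by omega) (by omega), indexOf_v1 (n+1) j (by omega) (by omega),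
        indexOf_v2 (n+1) i (by omega) (by omega), indexOf_v2 (n+1) j (by omega) (by omega),
        indexOf_v3 (n+1) i (by omega) (by omega), indexOf_v3 (n+1) j (by omega) (by omega),
        indexOf_v4 (n+1) i (by omega) (by omega), indexOf_v4 (n+1) j (by omega) (by omega)]
    rw [show eta (n+1) i j = (if i ≤ 2^(n+3) ∧ j ≤ 2^(n+3) then eta n i j
        else if 2^(n+3) < i ∧ 2^(n+3) < j then eta n (i - 2^(n+3)) (j - 2^(n+3))
        else if i ≤ 2^(n+3) then decide ((i + j) % 2 = 0)
        else decide ((i + j) % 2 = 1)) from rfl] at heta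
    split_ifs at heta with hc1 hc2 hc3
    · have hB := bowtie_caseA (2^(n+3)) (Rprofile n) hmem i j (by omega) hc1.1 (by omega) hc1.2
      have hIH := ih i (by rw [List.mem_range'_1]; omega) j (by rw [List.mem_range'_1]; omega)
        hne heta
      have hv := vsum_same (M := 2^(n+1+1)) hM (by omega) (by omega) (by omega) (by omega)
        hne (by omega)
      omega
    · have hB := bowtie_caseB (2^(n+3)) (Rprofile n) hmem i j hc2.1 (by omega) hc2.2 (by omega)
      have hIH := ih (i - 2^(n+3)) (by rw [List.mem_range'_1]; omega)
        (j - 2^(n+3)) (by rw [List.mem_range'_1]; omega) (by omega) heta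
      have hv := vsum_same (M := 2^(n+1+1)) hM (by omega) (by omega) (by omega) (by omega)
        hne (by omega)
      omega
    · rw [decide_eq_true_eq] at heta
      have hB := bowtie_caseC (2^(n+3)) (Rprofile n) hmem i j (by omega) hc3 (by omega) (by omega)
      have hv := vsum_cross1 (M := 2^(n+1+1)) (i := i) (j := j) hM (by omega) (by omega) (by omega) (by omega)
        (by omega)
      omega
    · rw [decide_eq_true_eq] at heta
      have hB := bowtie_caseD (2^(n+3)) (Rprofile n) hmem i j (by omega) (by omega) (by omega)
        (by omega)
      have hv := vsum_cross2 (M := 2^(n+1+1)) (i := i) (j := j) hM (by omega) (by omega) (by omega) (by omega)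
        (by omega)
      omega
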